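/- For every t > 0 and x ∈ ℝ, lim_{ε→0⁺} (1/ε) E[(u(t,x+ε) - u(t,x))²] = 1. -/

import Mathlib

open MeasureTheory Real Filter Topology

section aux
open Set

noncomputable def hfun : ℝ → ℝ := fun u => (Real.sqrt u)⁻¹ * (1 - Real.exp (-1/(4*u)))

lemma hfun_nonneg (u : ℝ) : 0 ≤ hfun u := by
  unfold hfun
  rcases le_or_gt u 0 with hu | hu
  · rcases eq_or_lt_of_le hu with rfl | hu
    · simp
    · rw [Real.sqrt_eq_zero_of_nonpos hu.le]; simp
  · apply mul_nonneg (by positivity)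
    have : Real.exp (-1/(4*u)) ≤ 1 := by
      rw [Real.exp_le_one_iff]
      apply div_nonpos_of_nonpos_of_nonneg <;> linarith
    linarith

lemma hfun_meas : Measurable hfun := by
  unfold hfun
  fun_prop

lemma hfun_integrable : IntegrableOn hfun (Ioi 0) := by
  have h1 : IntegrableOn hfun (Ioc 0 1) := by
    have hb : IntegrableOn (fun u : ℝ => u ^ (-(1:ℝ)/2)) (Ioc 0 1) := by
      rw [← intervalIntegrable_iff_integrableOn_Ioc_of_le zero_le_one]
      exact intervalIntegral.intervalIntegrable_rpow' (by norm_num)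
    apply Integrable.mono' hb hfun_meas.aestronglyMeasurable
    filter_upwards [ae_restrict_mem measurableSet_Ioc] with u hu
    rw [Real.norm_eq_abs, abs_of_nonneg (hfun_nonneg u)]
    unfold hfun
    have hu0 : 0 < u := hu.1
    have hs : Real.sqrt u = u ^ ((1:ℝ)/2) := Real.sqrt_eq_rpow u
    rw [hs, ← Real.rpow_neg hu0.le]
    have : 1 - Real.exp (-1/(4*u)) ≤ 1 := by
      have : 0 < Real.exp (-1/(4*u)) := Real.exp_pos _
      linarith
    calc u ^ (-((1:ℝ)/2)) * (1 - Real.exp (-1/(4*u))) ≤ u ^ (-((1:ℝ)/2)) * 1 := by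
          apply mul_le_mul_of_nonneg_left this (by positivity)
      _ = u ^ (-(1:ℝ)/2) := by rw [mul_one]; norm_num
  have h2 : IntegrableOn hfun (Ioi 1) := by
    have hb : IntegrableOn (fun u : ℝ => u ^ (-(3:ℝ)/2)) (Ioi 1) :=
      integrableOn_Ioi_rpow_of_lt (by norm_num) one_pos
    apply Integrable.mono' hb hfun_meas.aestronglyMeasurable
    filter_upwards [ae_restrict_mem measurableSet_Ioi] with u hu
    rw [Real.norm_eq_abs, abs_of_nonneg (hfun_nonneg u)]
    have hu0 : (0:ℝ) < u := lt_trans one_pos hu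
    unfold hfun
    have hexp : 1 - Real.exp (-1/(4*u)) ≤ 1/(4*u) := by
      have := Real.add_one_le_exp (-(1/(4*u)))
      have h4u : (0:ℝ) < 4*u := by linarith
      rw [neg_div]
      linarith
    have hs : (Real.sqrt u)⁻¹ = u ^ (-(1:ℝ)/2) := by
      rw [Real.sqrt_eq_rpow, ← Real.rpow_neg hu0.le]; norm_num
    rw [hs]
    calc u ^ (-(1:ℝ)/2) * (1 - Real.exp (-1/(4*u))) ≤ u ^ (-(1:ℝ)/2) * (1/(4*u)) := by
          apply mul_le_mul_of_nonneg_left hexp (by positivity)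
      _ = (1/4) * u ^ (-(3:ℝ)/2) := by
          rw [show (-(3:ℝ)/2) = (-(1:ℝ)/2) + (-1 : ℝ) by norm_num, Real.rpow_add hu0,
            Real.rpow_neg_one]
          field_simp
      _ ≤ u ^ (-(3:ℝ)/2) := by
          nlinarith [Real.rpow_nonneg hu0.le (-(3:ℝ)/2)]
  have : Ioi (0:ℝ) = Ioc 0 1 ∪ Ioi 1 := by
    rw [Set.Ioc_union_Ioi_eq_Ioi]; norm_num
  rw [this]
  exact h1.union h2



noncomputable def g2 : ℝ → ℝ := fun x => 2 * (x^2)⁻¹ * (1 - Real.exp (-(1/4) * x^2))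

noncomputable def Ff : ℝ → ℝ := fun x => -2 * x⁻¹ * (1 - Real.exp (-(1/4) * x^2))

lemma one_sub_exp_nonneg {y : ℝ} (hy : 0 ≤ y) : 0 ≤ 1 - Real.exp (-y) := by
  have : Real.exp (-y) ≤ 1 := by rw [Real.exp_le_one_iff]; linarith
  linarith

lemma one_sub_exp_le {y : ℝ} : 1 - Real.exp (-y) ≤ y := by
  nlinarith [Real.add_one_le_exp (-y)]

lemma g2_nonneg (x : ℝ) : 0 ≤ g2 x := by
  unfold g2
  have h := one_sub_exp_nonneg (y := (1/4) * x^2) (by positivity)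
  rw [show -(1/4 : ℝ) * x^2 = -((1/4)*x^2) by ring]
  positivity

lemma g2_meas : Measurable g2 := by unfold g2; fun_prop

lemma g2_integrable : IntegrableOn g2 (Ioi 0) := by
  have h1 : IntegrableOn g2 (Ioc 0 1) := by
    have hb : IntegrableOn (fun _ : ℝ => (1/2 : ℝ)) (Ioc (0:ℝ) 1) volume := by
      apply (integrableOn_const_iff).mpr
      right
      exact measure_Ioc_lt_top
    apply Integrable.mono' hb g2_meas.aestronglyMeasurable
    filter_upwards [ae_restrict_mem measurableSet_Ioc] with x hx
    rw [Real.norm_eq_abs, abs_of_nonneg (g2_nonneg x)]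
    unfold g2
    have hx0 : 0 < x := hx.1
    have hexp : 1 - Real.exp (-(1/4) * x^2) ≤ (1/4) * x^2 := by
      rw [show -(1/4 : ℝ) * x^2 = -((1/4)*x^2) by ring]; exact one_sub_exp_le
    calc 2 * (x^2)⁻¹ * (1 - Real.exp (-(1/4) * x^2)) ≤ 2 * (x^2)⁻¹ * ((1/4) * x^2) := by
          apply mul_le_mul_of_nonneg_left hexp (by positivity)
      _ = 1/2 := by field_simp; norm_num
  have h2 : IntegrableOn g2 (Ioi 1) := by
    have hb : IntegrableOn (fun x : ℝ => 2 * x ^ (-2:ℝ)) (Ioi 1) :=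
      (integrableOn_Ioi_rpow_of_lt (by norm_num) one_pos).const_mul 2
    apply Integrable.mono' hb g2_meas.aestronglyMeasurable
    filter_upwards [ae_restrict_mem measurableSet_Ioi] with x hx
    rw [Real.norm_eq_abs, abs_of_nonneg (g2_nonneg x)]
    have hx0 : (0:ℝ) < x := lt_trans one_pos hx
    unfold g2
    have hexp : 1 - Real.exp (-(1/4) * x^2) ≤ 1 := by
      have := Real.exp_pos (-(1/4) * x^2); linarith
    have hr : x ^ (-2:ℝ) = (x^2)⁻¹ := by
      rw [Real.rpow_neg hx0.le, show (2:ℝ) = ((2:ℕ):ℝ) by norm_num, Real.rpow_natCast]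
    rw [hr]
    nlinarith [inv_pos.mpr (pow_pos hx0 2)]
  have : Ioi (0:ℝ) = Ioc 0 1 ∪ Ioi 1 := by rw [Set.Ioc_union_Ioi_eq_Ioi]; norm_num
  rw [this]
  exact h1.union h2

lemma gauss_integrable : IntegrableOn (fun x : ℝ => Real.exp (-(1/4) * x^2)) (Ioi 0) :=
  (integrable_exp_neg_mul_sq (by norm_num : (0:ℝ) < 1/4)).integrableOn

lemma Ff_deriv {x : ℝ} (hx : 0 < x) :
    HasDerivAt Ff (g2 x - Real.exp (-(1/4) * x^2)) x := by
  have d1 : HasDerivAt (fun x : ℝ => -2 * x⁻¹) (-2 * -(x^2)⁻¹) x :=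
    (hasDerivAt_inv hx.ne').const_mul (-2)
  have d2 : HasDerivAt (fun x : ℝ => -(1/4) * x^2) (-(1/4) * (2 * x^1)) x :=
    (hasDerivAt_pow 2 x).const_mul (-(1/4))
  have d3 : HasDerivAt (fun x : ℝ => 1 - Real.exp (-(1/4) * x^2))
      (-(Real.exp (-(1/4) * x^2) * (-(1/4) * (2 * x^1)))) x :=
    (d2.exp).const_sub 1
  have := d1.mul d3
  refine HasDerivAt.congr_deriv this ?_
  unfold g2
  field_simp
  ring

lemma Ff_tendsto_top : Tendsto Ff atTop (𝓝 0) := by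
  apply squeeze_zero_norm' (a := fun x : ℝ => 2 * x⁻¹)
  · filter_upwards [eventually_ge_atTop (1:ℝ)] with x hx
    have hx0 : (0:ℝ) < x := lt_of_lt_of_le one_pos hx
    unfold Ff
    rw [show -(1/4 : ℝ) * x^2 = -((1/4)*x^2) by ring]
    have hexp0 := one_sub_exp_nonneg (y := (1/4) * x^2) (by positivity)
    have hexp1 : 1 - Real.exp (-((1/4) * x^2)) ≤ 1 := by
      have := Real.exp_pos (-((1/4) * x^2)); linarith
    rw [Real.norm_eq_abs, abs_mul, abs_mul, abs_of_nonneg hexp0,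
      abs_of_nonneg (inv_pos.mpr hx0).le, show |(-2:ℝ)| = 2 by norm_num]
    nlinarith [inv_pos.mpr hx0]
  · have : Tendsto (fun x : ℝ => x⁻¹) atTop (𝓝 0) := tendsto_inv_atTop_zero
    simpa using this.const_mul 2

lemma Ff_cont0 : ContinuousWithinAt Ff (Ici 0) 0 := by
  have hF0 : Ff 0 = 0 := by unfold Ff; simp
  unfold ContinuousWithinAt
  rw [hF0]
  apply squeeze_zero_norm' (a := fun x : ℝ => x / 2)
  · filter_upwards [self_mem_nhdsWithin] with x (hx : (0:ℝ) ≤ x)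
    rcases eq_or_lt_of_le hx with rfl | hx0
    · simp [hF0]
    · unfold Ff
      rw [show -(1/4 : ℝ) * x^2 = -((1/4)*x^2) by ring]
      have hexp0 := one_sub_exp_nonneg (y := (1/4) * x^2) (by positivity)
      have hexp : 1 - Real.exp (-((1/4) * x^2)) ≤ (1/4) * x^2 := one_sub_exp_le
      rw [Real.norm_eq_abs, abs_mul, abs_mul, abs_of_nonneg hexp0,
        abs_of_nonneg (inv_pos.mpr hx0).le, show |(-2:ℝ)| = 2 by norm_num]
      have h2 : 2 * x⁻¹ * (1 - Real.exp (-((1/4)*x^2))) ≤ 2 * x⁻¹ * ((1/4)*x^2) :=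
        mul_le_mul_of_nonneg_left hexp (by positivity)
      have h3 : 2 * x⁻¹ * ((1/4)*x^2) = x / 2 := by field_simp; ring
      linarith
  · have : Tendsto (fun x : ℝ => x / 2) (𝓝 0) (𝓝 (0/2)) :=
      (continuous_id.div_const 2).tendsto 0
    simpa using this.mono_left nhdsWithin_le_nhds

lemma integral_g2 : ∫ x in Ioi (0:ℝ), g2 x = Real.sqrt π := by
  have hφint : IntegrableOn (fun x => g2 x - Real.exp (-(1/4) * x^2)) (Ioi 0) :=
    g2_integrable.sub gauss_integrable
  have key : ∫ x in Ioi (0:ℝ), (g2 x - Real.exp (-(1/4) * x^2)) = 0 - Ff 0 :=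
    integral_Ioi_of_hasDerivAt_of_tendsto Ff_cont0 (fun x hx => Ff_deriv hx) hφint
      Ff_tendsto_top
  have hF0 : Ff 0 = 0 := by unfold Ff; simp
  rw [hF0, sub_zero] at key
  rw [integral_sub g2_integrable gauss_integrable] at key
  have hgauss : ∫ x in Ioi (0:ℝ), Real.exp (-(1/4) * x^2) = Real.sqrt π := by
    rw [integral_gaussian_Ioi]
    rw [show π / (1/4) = 4 * π by ring, show (4:ℝ) = 2^2 by norm_num,
      Real.sqrt_mul (by positivity), Real.sqrt_sq (by norm_num : (0:ℝ) ≤ 2)]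
    ring
  linarith [key, hgauss ▸ key]

lemma integral_hfun : ∫ u in Ioi (0:ℝ), hfun u = Real.sqrt π := by
  rw [← integral_comp_rpow_Ioi hfun (p := -2) (by norm_num)]
  rw [← integral_g2]
  apply setIntegral_congr_fun measurableSet_Ioi
  intro x hx
  have hx0 : (0:ℝ) < x := hx
  have hr2 : x ^ (-2:ℝ) = (x^2)⁻¹ := by
    rw [Real.rpow_neg hx0.le, show (2:ℝ) = ((2:ℕ):ℝ) by norm_num, Real.rpow_natCast]
  have hr3 : x ^ ((-2:ℝ) - 1) = (x^3)⁻¹ := by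
    rw [show ((-2:ℝ) - 1) = -3 by norm_num, Real.rpow_neg hx0.le,
      show (3:ℝ) = ((3:ℕ):ℝ) by norm_num, Real.rpow_natCast]
  simp only [smul_eq_mul]
  rw [hr2, hr3]
  unfold hfun g2
  have hs : Real.sqrt ((x^2)⁻¹) = x⁻¹ := by
    rw [Real.sqrt_inv, Real.sqrt_sq hx0.le]
  rw [hs, inv_inv]
  have hexp : -1/(4 * (x^2)⁻¹) = -(1/4) * x^2 := by field_simp
  rw [hexp]
  have : |(-2:ℝ)| = 2 := by norm_num
  rw [this]
  field_simp



lemma scale_eq (t ε : ℝ) (ht : 0 < t) (hε : 0 < ε) :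
    ∫ u in (0:ℝ)..(t/ε^2), hfun u =
      ε⁻¹ * ∫ r in Ioc (0:ℝ) t, (Real.sqrt r)⁻¹ * (1 - Real.exp (-ε^2/(4*r))) := by
  have hfe : ∀ u : ℝ, hfun u =
      ε * ((Real.sqrt (ε^2*u))⁻¹ * (1 - Real.exp (-ε^2/(4*(ε^2*u))))) := by
    intro u
    rcases le_or_gt u 0 with hu | hu
    · unfold hfun
      rw [Real.sqrt_eq_zero_of_nonpos hu, Real.sqrt_eq_zero_of_nonpos]
      · simp
      · nlinarith [sq_nonneg ε]
    · unfold hfun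
      have hs : Real.sqrt (ε^2*u) = ε * Real.sqrt u := by
        rw [Real.sqrt_mul (sq_nonneg ε), Real.sqrt_sq hε.le]
      rw [hs]
      have he : -ε^2/(4*(ε^2*u)) = -1/(4*u) := by
        rw [div_eq_div_iff (by positivity) (by positivity)]
        ring
      rw [he, mul_inv]
      have h0 : Real.sqrt u ≠ 0 := (Real.sqrt_pos.mpr hu).ne'
      field_simp
  have h1 : ∫ r in Ioc (0:ℝ) t, (Real.sqrt r)⁻¹ * (1 - Real.exp (-ε^2/(4*r)))
      = ∫ r in (0:ℝ)..t, (Real.sqrt r)⁻¹ * (1 - Real.exp (-ε^2/(4*r))) :=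
    (intervalIntegral.integral_of_le ht.le).symm
  have h2 : ∫ u in (0:ℝ)..(t/ε^2),
        (fun r => (Real.sqrt r)⁻¹ * (1 - Real.exp (-ε^2/(4*r)))) (ε^2 * u)
      = (ε^2)⁻¹ • ∫ r in (ε^2*0)..(ε^2*(t/ε^2)),
        (Real.sqrt r)⁻¹ * (1 - Real.exp (-ε^2/(4*r))) :=
    intervalIntegral.integral_comp_mul_left (fun r => (Real.sqrt r)⁻¹ * (1 - Real.exp (-ε^2/(4*r)))) (show (ε^2:ℝ) ≠ 0 by positivity)
  have hε2 : ε^2*(t/ε^2) = t := by field_simp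
  rw [hε2, mul_zero] at h2
  calc ∫ u in (0:ℝ)..(t/ε^2), hfun u
      = ∫ u in (0:ℝ)..(t/ε^2),
          ε * ((fun r => (Real.sqrt r)⁻¹ * (1 - Real.exp (-ε^2/(4*r)))) (ε^2 * u)) := by
        simp only [hfe]
    _ = ε * ∫ u in (0:ℝ)..(t/ε^2),
          (fun r => (Real.sqrt r)⁻¹ * (1 - Real.exp (-ε^2/(4*r)))) (ε^2 * u) :=
        intervalIntegral.integral_const_mul _ _
    _ = ε * ((ε^2)⁻¹ • ∫ r in (0:ℝ)..t, (Real.sqrt r)⁻¹ * (1 - Real.exp (-ε^2/(4*r)))) := by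
        rw [h2]
    _ = ε⁻¹ * ∫ r in Ioc (0:ℝ) t, (Real.sqrt r)⁻¹ * (1 - Real.exp (-ε^2/(4*r))) := by
        rw [h1, smul_eq_mul, ← mul_assoc]
        congr 1
        field_simp

end aux

/-- For every `t > 0` and `x ∈ ℝ`, `lim_{ε→0⁺} (1/ε) E[(u(t,x+ε)-u(t,x))²] = 1`, where
`E[(u(t,x+ε)-u(t,x))²] = (1/√π) ∫₀^t r^{-1/2}(1 - e^{-ε²/(4r)}) dr`. -/
theorem stmt_15 (t : ℝ) (ht : 0 < t) :
    Tendsto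
      (fun ε : ℝ =>
        ε⁻¹ * ((Real.sqrt π)⁻¹ *
          ∫ r in Set.Ioc (0 : ℝ) t, (Real.sqrt r)⁻¹ * (1 - Real.exp (-ε ^ 2 / (4 * r)))))
      (nhdsWithin 0 (Set.Ioi 0)) (nhds 1) := by
  have hT : Tendsto (fun ε : ℝ => t / ε ^ 2) (𝓝[>] (0:ℝ)) atTop := by
    have h1 : Tendsto (fun ε : ℝ => ε ^ 2) (𝓝[>] (0:ℝ)) (𝓝[>] (0:ℝ)) := by
      apply tendsto_nhdsWithin_of_tendsto_nhds_of_eventually_within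
      · exact ((continuous_pow 2).tendsto' 0 0 (by norm_num)).mono_left nhdsWithin_le_nhds
      · filter_upwards [self_mem_nhdsWithin] with x (hx : (0:ℝ) < x)
        exact pow_pos hx 2
    have h2 : Tendsto (fun y : ℝ => t / y) (𝓝[>] (0:ℝ)) atTop := by
      simp_rw [div_eq_mul_inv]
      exact Tendsto.const_mul_atTop ht tendsto_inv_nhdsGT_zero
    exact h2.comp h1
  have hmain : Tendsto (fun ε : ℝ => ∫ u in (0:ℝ)..(t / ε ^ 2), hfun u) (𝓝[>] (0:ℝ))
      (𝓝 (Real.sqrt π)) := by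
    have := intervalIntegral_tendsto_integral_Ioi 0 hfun_integrable hT
    rwa [integral_hfun] at this
  have hsq : (Real.sqrt π) ≠ 0 := (Real.sqrt_pos.mpr Real.pi_pos).ne'
  have hfin : Tendsto (fun ε : ℝ => (Real.sqrt π)⁻¹ * ∫ u in (0:ℝ)..(t / ε ^ 2), hfun u)
      (𝓝[>] (0:ℝ)) (𝓝 1) := by
    have := hmain.const_mul ((Real.sqrt π)⁻¹)
    rwa [inv_mul_cancel₀ hsq] at this
  apply hfin.congr'
  filter_upwards [self_mem_nhdsWithin] with ε (hε : (0:ℝ) < ε)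
  rw [scale_eq t ε ht hε]
  ring
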